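/- If r is a square root on a pseudo MV-algebra M, then r(0) = max{x ∧ x⁻ : x ∈ M} = max{x ∧ x∼ : x ∈ M}. -/
import Mathlib


/-- A pseudo MV-algebra `(M; ⊕, ⁻, ∼, 0, 1)` satisfying axioms (A1)–(A8),
with `x ⊙ y := (y⁻ ⊕ x⁻)∼`. -/
class PseudoMV (M : Type*) where
  oplus : M → M → M
  lneg : M → M
  rneg : M → M
  zero : M
  one : M
  oplus_assoc : ∀ x y z : M, oplus x (oplus y z) = oplus (oplus x y) z
  oplus_zero : ∀ x : M, oplus x zero = x
  zero_oplus : ∀ x : M, oplus zero x = x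
  oplus_one : ∀ x : M, oplus x one = one
  one_oplus : ∀ x : M, oplus one x = one
  lneg_one : lneg one = zero
  rneg_one : rneg one = zero
  a5 : ∀ x y : M, rneg (oplus (lneg x) (lneg y)) = lneg (oplus (rneg x) (rneg y))
  a6₁ : ∀ x y : M,
    oplus x (rneg (oplus (lneg y) (lneg (rneg x)))) =
      oplus y (rneg (oplus (lneg x) (lneg (rneg y))))
  a6₂ : ∀ x y : M,
    oplus x (rneg (oplus (lneg y) (lneg (rneg x)))) =
      oplus (rneg (oplus (lneg (lneg y)) (lneg x))) y
  a6₃ : ∀ x y : M,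
    oplus x (rneg (oplus (lneg y) (lneg (rneg x)))) =
      oplus (rneg (oplus (lneg (lneg x)) (lneg y))) x
  a7 : ∀ x y : M,
    rneg (oplus (lneg (oplus (lneg x) y)) (lneg x)) =
      rneg (oplus (lneg y) (lneg (oplus x (rneg y))))
  a8 : ∀ x : M, rneg (lneg x) = x

namespace PseudoMV

variable {M : Type*} [PseudoMV M]

/-- `x ⊙ y := (y⁻ ⊕ x⁻)∼`. -/
def mul (x y : M) : M := rneg (oplus (lneg y) (lneg x))

/-- `x ∨ y = x ⊕ (x∼ ⊙ y)` (axiom (A6)). -/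
def sup (x y : M) : M := oplus x (mul (rneg x) y)

/-- `x ∧ y = x ⊙ (x⁻ ⊕ y)` (axiom (A7)). -/
def inf (x y : M) : M := mul x (oplus (lneg x) y)

/-- The lattice order of a pseudo MV-algebra. -/
def le (x y : M) : Prop := sup x y = y

/-- `x → y := x⁻ ⊕ y`. -/
def arrow (x y : M) : M := oplus (lneg x) y

/-- `x ⇝ y := y ⊕ x∼`. -/
def squig (x y : M) : M := oplus y (rneg x)

/-- A weak square root: (Sq1) and (Sq2). -/
def IsWeakSqrt (r : M → M) : Prop :=
  (∀ x : M, mul (r x) (r x) = x) ∧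
  (∀ x y : M, le (mul y y) x → le y (r x))

/-- A square root: (Sq1), (Sq2) and (Sq3). -/
def IsSqrt (r : M → M) : Prop :=
  IsWeakSqrt r ∧
  (∀ x : M, r (lneg x) = arrow (r x) (r zero) ∧ r (rneg x) = squig (r x) (r zero))

end PseudoMV

open PseudoMV

namespace PseudoMV

variable {M : Type*} [PseudoMV M]

lemma lneg_rneg (x : M) : lneg (rneg x) = x := by
  have h := a5 x (one : M)
  rw [lneg_one, oplus_zero, rneg_one, oplus_zero, a8] at h
  exact h.symm

lemma lneg_zero : lneg (zero : M) = one := by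
  rw [← rneg_one, lneg_rneg]

lemma rneg_zero : rneg (zero : M) = one := by
  rw [← lneg_one, a8]

lemma oplus_rneg (x : M) : oplus x (rneg x) = one := by
  have h := a6₂ x (one : M)
  rw [lneg_one, zero_oplus, a8, oplus_one] at h
  exact h

lemma lneg_oplus (x : M) : oplus (lneg x) x = one := by
  have h := a6₃ x (one : M)
  rw [lneg_one, zero_oplus, a8, oplus_zero, a8, oplus_rneg] at h
  exact h.symm

lemma le_char1 {x y : M} (h : le x y) : oplus (lneg x) y = one := by
  unfold le sup at h
  rw [← h, oplus_assoc, lneg_oplus, one_oplus]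

lemma le_char2 {x y : M} (h : le x y) : oplus y (rneg x) = one := by
  unfold le sup mul at h
  have h3 := a6₃ x y
  rw [lneg_rneg] at h h3
  rw [← h, h3, ← oplus_assoc, oplus_rneg, oplus_one]

lemma char1_le {x y : M} (h : oplus (lneg x) y = one) : le x y := by
  unfold le sup mul
  rw [a6₁ x y, lneg_rneg, h, rneg_one, oplus_zero]

lemma char2_le {x y : M} (h : oplus y (rneg x) = one) : le x y := by
  unfold le sup mul
  have h5 := a5 (lneg y) x
  rw [a8] at h5
  rw [a6₂ x y, h5, h, lneg_one, zero_oplus]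

lemma le_trans' {x y z : M} (h1 : le x y) (h2 : le y z) : le x z := by
  apply char1_le
  have hz : oplus y (mul (rneg y) z) = z := h2
  rw [← hz, oplus_assoc, le_char1 h1, one_oplus]

lemma le_oplus_right (a c : M) : le a (oplus a c) := by
  apply char1_le
  rw [oplus_assoc, lneg_oplus, one_oplus]

lemma le_oplus_left (a d : M) : le a (oplus d a) := by
  apply char2_le
  rw [← oplus_assoc, oplus_rneg, oplus_one]

lemma oplus_mono_right {x y : M} (u : M) (h : le x y) : le (oplus u x) (oplus u y) := by
  have hy : oplus x (mul (rneg x) y) = y := h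
  rw [← hy, oplus_assoc]
  exact le_oplus_right _ _

lemma oplus_mono_left {x y : M} (u : M) (h : le x y) : le (oplus x u) (oplus y u) := by
  have hxy : oplus (rneg (oplus (lneg (lneg x)) (lneg y))) x = y := by
    rw [← a6₃ x y]; exact h
  rw [← hxy, ← oplus_assoc]
  exact le_oplus_left _ _

lemma lneg_antitone {x y : M} (h : le x y) : le (lneg y) (lneg x) := by
  apply char2_le
  rw [a8]
  exact le_char1 h

lemma rneg_antitone {x y : M} (h : le x y) : le (rneg y) (rneg x) := by
  apply char1_le
  rw [lneg_rneg]
  exact le_char2 h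

lemma mul_mono_left {x y : M} (u : M) (h : le x y) : le (mul x u) (mul y u) := by
  unfold mul
  exact rneg_antitone (oplus_mono_right _ (lneg_antitone h))

lemma mul_mono_right {x y : M} (u : M) (h : le x y) : le (mul u x) (mul u y) := by
  unfold mul
  exact rneg_antitone (oplus_mono_left _ (lneg_antitone h))

lemma inf_le_left (x y : M) : le (inf x y) x := by
  apply char1_le
  unfold inf mul
  rw [lneg_rneg, ← oplus_assoc, lneg_oplus, oplus_one]

lemma inf_le_right (x y : M) : le (inf x y) y := by
  apply char1_le
  unfold inf mul
  rw [lneg_rneg, ← oplus_assoc, lneg_oplus]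

lemma mul_lneg_self (x : M) : mul x (lneg x) = zero := by
  unfold mul
  rw [lneg_oplus, rneg_one]

lemma mul_rneg_self (x : M) : mul (rneg x) x = zero := by
  unfold mul
  rw [lneg_rneg, lneg_oplus, rneg_one]

lemma mul_one' (x : M) : mul x one = x := by
  unfold mul
  rw [lneg_one, zero_oplus, a8]

end PseudoMV

theorem stmt10 {M : Type*} [PseudoMV M] (r : M → M) (hr : IsSqrt r) :
    ((∀ x : M, le (inf x (lneg x)) (r zero)) ∧ (∃ x : M, inf x (lneg x) = r zero)) ∧
    ((∀ x : M, le (inf x (rneg x)) (r zero)) ∧ (∃ x : M, inf x (rneg x) = r zero)) := by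
  obtain ⟨⟨hsq1, hsq2⟩, _⟩ := hr
  set a := r zero with ha
  -- from r(0) ⊙ r(0) = 0 :
  have h0 : mul a a = zero := hsq1 zero
  have hll : oplus (lneg a) (lneg a) = one := by
    have : lneg (rneg (oplus (lneg a) (lneg a))) = lneg zero := by
      unfold mul at h0; rw [h0]
    rwa [lneg_rneg, lneg_zero] at this
  have hrr : oplus (rneg a) (rneg a) = one := by
    have h5 := a5 a a
    unfold mul at h0
    rw [h0] at h5
    have : rneg (lneg (oplus (rneg a) (rneg a))) = rneg zero := by rw [← h5]
    rwa [a8, rneg_zero] at this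
  constructor
  · constructor
    · intro x
      apply hsq2
      have h1 : le (inf x (lneg x)) x := inf_le_left x (lneg x)
      have h2 : le (inf x (lneg x)) (lneg x) := inf_le_right x (lneg x)
      have h3 : le (mul (inf x (lneg x)) (inf x (lneg x))) (mul x (lneg x)) :=
        le_trans' (mul_mono_left _ h1) (mul_mono_right _ h2)
      rwa [mul_lneg_self] at h3
    · exact ⟨a, by unfold inf; rw [hll, mul_one']⟩
  · constructor
    · intro x
      apply hsq2
      have h1 : le (inf x (rneg x)) x := inf_le_left x (rneg x)
      have h2 : le (inf x (rneg x)) (rneg x) := inf_le_right x (rneg x)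
      have h3 : le (mul (inf x (rneg x)) (inf x (rneg x))) (mul (rneg x) x) :=
        le_trans' (mul_mono_left _ h2) (mul_mono_right _ h1)
      rwa [mul_rneg_self] at h3
    · refine ⟨a, ?_⟩
      -- need lneg a ⊕ rneg a = 1
      have haa : le a (rneg a) := char2_le hrr
      have h4 : le (oplus (lneg a) a) (oplus (lneg a) (rneg a)) := oplus_mono_right _ haa
      rw [lneg_oplus] at h4
      have h5 : oplus (lneg a) (rneg a) = one := by
        have := h4
        unfold le sup at this
        rw [← this, one_oplus]
      unfold inf
      rw [h5, mul_one']
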